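/- Let σ ≥ 1 be a real number, let μ ∈ [0,1), and let m be an integer with m ≥ 2. Define f(σ, μ, m) := Σ_{j=−2^{m−1}}^{2^{m−1}−1} exp(−(j+μ)²/(2σ²)). Then |2·f(σ/2, μ/2, m−1)/f(σ, μ, m) − 1| ≤ 1/2. -/

import Mathlib

set_option maxHeartbeats 1600000 in
/-- The argument of the arcsine in the rotation angle for Gaussian-state
generation is bounded by 1/2. -/
theorem rotation_angle_arg_bound
    (σ μ : ℝ) (hσ : 1 ≤ σ) (hμ : μ ∈ Set.Ico (0:ℝ) 1)
    (m : ℕ) (hm : 2 ≤ m) :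
    |2 * (∑ j ∈ Finset.Icc (-(2^(m-2)) : ℤ) (2^(m-2) - 1),
        Real.exp (-((j:ℝ) + μ/2)^2 / (2 * (σ/2)^2))) /
      (∑ j ∈ Finset.Icc (-(2^(m-1)) : ℤ) (2^(m-1) - 1),
        Real.exp (-((j:ℝ) + μ)^2 / (2 * σ^2))) - 1| ≤ 1/2 := by
  obtain ⟨hμ0, hμ1⟩ := hμ
  have hσ0 : (0:ℝ) < σ := lt_of_lt_of_le one_pos hσ
  have hσ2 : (1:ℝ) ≤ σ^2 := by nlinarith
  set g : ℤ → ℝ := fun j => Real.exp (-((j:ℝ) + μ)^2 / (2 * σ^2)) with hg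
  have gpos : ∀ j : ℤ, 0 < g j := fun j => Real.exp_pos _
  set M : ℤ := 2^(m-2) with hMdef
  set N : ℤ := 2^(m-1) with hNdef
  have hM1 : (1:ℤ) ≤ M := by
    have h := pow_pos (show (0:ℤ) < 2 from by norm_num) (m-2)
    omega
  have hNM : N = 2 * M := by
    rw [hNdef, hMdef, show m - 1 = (m-2) + 1 from by omega, pow_succ]; ring
  -- comparison of Gaussian terms
  have gle : ∀ x y : ℤ, ((y:ℝ) + μ)^2 ≤ ((x:ℝ) + μ)^2 → g x ≤ g y := by
    intro x y h
    apply Real.exp_le_exp.mpr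
    have h2 : (0:ℝ) < 2*σ^2 := by positivity
    rw [div_le_div_iff_of_pos_right h2]
    nlinarith
  -- rewrite the numerator sum in terms of g
  have hA : (∑ j ∈ Finset.Icc (-M) (M - 1),
        Real.exp (-((j:ℝ) + μ/2)^2 / (2 * (σ/2)^2)))
      = ∑ k ∈ Finset.Icc (-M) (M-1), g (2*k) := by
    refine Finset.sum_congr rfl fun k _ => ?_
    rw [hg]
    dsimp only
    congr 1
    push_cast
    field_simp
  -- even/odd split of the denominator sum
  have hsplit : (∑ j ∈ Finset.Icc (-N) (N-1), g j)
      = (∑ k ∈ Finset.Icc (-M) (M-1), g (2*k))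
        + (∑ k ∈ Finset.Icc (-M) (M-1), g (2*k+1)) := by
    rw [← Finset.sum_filter_add_sum_filter_not (Finset.Icc (-N) (N-1))
      (fun j => j % 2 = 0) g]
    congr 1
    · refine Finset.sum_nbij' (fun j => j / 2) (fun k => 2 * k) ?_ ?_ ?_ ?_ ?_
      · intro a ha; simp only [Finset.mem_filter, Finset.mem_Icc] at ha ⊢; beta_reduce; omega
      · intro a ha; simp only [Finset.mem_filter, Finset.mem_Icc] at ha ⊢; beta_reduce; omega
      · intro a ha; simp only [Finset.mem_filter, Finset.mem_Icc] at ha; beta_reduce; omega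
      · intro a ha; beta_reduce; omega
      · intro a ha; simp only [Finset.mem_filter, Finset.mem_Icc] at ha
        beta_reduce; congr 1; omega
    · refine Finset.sum_nbij' (fun j => (j-1) / 2) (fun k => 2 * k + 1) ?_ ?_ ?_ ?_ ?_
      · intro a ha; simp only [Finset.mem_filter, Finset.mem_Icc] at ha ⊢; beta_reduce; omega
      · intro a ha; simp only [Finset.mem_filter, Finset.mem_Icc] at ha ⊢; beta_reduce; omega
      · intro a ha; simp only [Finset.mem_filter, Finset.mem_Icc] at ha; beta_reduce; omega
      · intro a ha; beta_reduce; omega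
      · intro a ha; simp only [Finset.mem_filter, Finset.mem_Icc] at ha
        beta_reduce; congr 1; omega
  -- splitting an Icc sum at 0
  have hIcc : ∀ (f : ℤ → ℝ), (∑ k ∈ Finset.Icc (-M) (M-1), f k)
      = (∑ k ∈ Finset.Icc (-M) (-1), f k) + ∑ k ∈ Finset.Icc 0 (M-1), f k := by
    intro f
    rw [← Finset.sum_union]
    · congr 1
      ext x; simp only [Finset.mem_union, Finset.mem_Icc]; omega
    · simp only [Finset.disjoint_left, Finset.mem_Icc]
      intro a ha hb; omega
  -- splitting off the extreme element of the negative part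
  have hIccNeg : ∀ (f : ℤ → ℝ), (∑ k ∈ Finset.Icc (-M) (-1:ℤ), f k)
      = (∑ k ∈ Finset.Icc (-M) (-2:ℤ), f k) + f (-1) := by
    intro f
    rw [show Finset.Icc (-M) (-1:ℤ) = Finset.Icc (-M) (-2) ∪ {-1} from by
        ext x; simp only [Finset.mem_union, Finset.mem_Icc, Finset.mem_singleton]; omega,
      Finset.sum_union (by
        simp only [Finset.disjoint_left, Finset.mem_Icc, Finset.mem_singleton]
        intro a ha; omega),
      Finset.sum_singleton]
  have hIccPos : ∀ (f : ℤ → ℝ), (∑ k ∈ Finset.Icc (0:ℤ) (M-1), f k)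
      = f 0 + ∑ k ∈ Finset.Icc (1:ℤ) (M-1), f k := by
    intro f
    rw [show Finset.Icc (0:ℤ) (M-1) = {0} ∪ Finset.Icc (1:ℤ) (M-1) from by
        ext x; simp only [Finset.mem_union, Finset.mem_Icc, Finset.mem_singleton]; omega,
      Finset.sum_union (by
        simp only [Finset.disjoint_left, Finset.mem_Icc, Finset.mem_singleton]
        intro a ha; omega),
      Finset.sum_singleton]
  -- B ≤ A + g (-1)
  have hBA : (∑ k ∈ Finset.Icc (-M) (M-1), g (2*k+1))
      ≤ (∑ k ∈ Finset.Icc (-M) (M-1), g (2*k)) + g (-1) := by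
    rw [hIcc (fun k => g (2*k+1)), hIcc (fun k => g (2*k)),
      hIccNeg (fun k => g (2*k+1))]
    have h1 : (∑ k ∈ Finset.Icc (0:ℤ) (M-1), g (2*k+1))
        ≤ ∑ k ∈ Finset.Icc (0:ℤ) (M-1), g (2*k) := by
      refine Finset.sum_le_sum fun k hk => ?_
      simp only [Finset.mem_Icc] at hk
      have hk0 : (0:ℝ) ≤ (k:ℝ) := by exact_mod_cast hk.1
      apply gle; push_cast; nlinarith
    have h2 : (∑ k ∈ Finset.Icc (-M) (-2:ℤ), g (2*k+1))
        ≤ ∑ k ∈ Finset.Icc (-M) (-1:ℤ), g (2*k) := by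
      have step1 : (∑ k ∈ Finset.Icc (-M) (-2:ℤ), g (2*k+1))
          ≤ ∑ k ∈ Finset.Icc (-M) (-2:ℤ), g (2*(k+1)) := by
        refine Finset.sum_le_sum fun k hk => ?_
        simp only [Finset.mem_Icc] at hk
        have hk2 : (k:ℝ) ≤ -2 := by exact_mod_cast hk.2
        apply gle; push_cast; nlinarith
      have step2 : (∑ k ∈ Finset.Icc (-M) (-2:ℤ), g (2*(k+1)))
          = ∑ k ∈ Finset.Icc (-M+1) (-1:ℤ), g (2*k) := by
        refine Finset.sum_nbij' (fun k => k + 1) (fun k => k - 1) ?_ ?_ ?_ ?_ ?_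
        · intro a ha; simp only [Finset.mem_Icc] at ha ⊢; beta_reduce; omega
        · intro a ha; simp only [Finset.mem_Icc] at ha ⊢; beta_reduce; omega
        · intro a _; beta_reduce; omega
        · intro a _; beta_reduce; omega
        · intro a _; rfl
      have step3 : (∑ k ∈ Finset.Icc (-M+1) (-1:ℤ), g (2*k))
          ≤ ∑ k ∈ Finset.Icc (-M) (-1:ℤ), g (2*k) := by
        refine Finset.sum_le_sum_of_subset_of_nonneg ?_ (fun k _ _ => (gpos _).le)
        intro x hx; simp only [Finset.mem_Icc] at hx ⊢; omega
      calc _ ≤ _ := step1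
        _ = _ := step2
        _ ≤ _ := step3
    have e1 : g (2 * (-1:ℤ) + 1) = g (-1) := by norm_num
    linarith
  -- A ≤ B + g 0
  have hAB : (∑ k ∈ Finset.Icc (-M) (M-1), g (2*k))
      ≤ (∑ k ∈ Finset.Icc (-M) (M-1), g (2*k+1)) + g 0 := by
    rw [hIcc (fun k => g (2*k+1)), hIcc (fun k => g (2*k)),
      hIccPos (fun k => g (2*k))]
    have h1 : (∑ k ∈ Finset.Icc (-M) (-1:ℤ), g (2*k))
        ≤ ∑ k ∈ Finset.Icc (-M) (-1:ℤ), g (2*k+1) := by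
      refine Finset.sum_le_sum fun k hk => ?_
      simp only [Finset.mem_Icc] at hk
      have hk1 : (k:ℝ) ≤ -1 := by exact_mod_cast hk.2
      apply gle; push_cast; nlinarith
    have h2 : (∑ k ∈ Finset.Icc (1:ℤ) (M-1), g (2*k))
        ≤ ∑ k ∈ Finset.Icc (0:ℤ) (M-1), g (2*k+1) := by
      have step1 : (∑ k ∈ Finset.Icc (1:ℤ) (M-1), g (2*k))
          ≤ ∑ k ∈ Finset.Icc (1:ℤ) (M-1), g (2*(k-1)+1) := by
        refine Finset.sum_le_sum fun k hk => ?_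
        simp only [Finset.mem_Icc] at hk
        have hk1 : (1:ℝ) ≤ (k:ℝ) := by exact_mod_cast hk.1
        apply gle; push_cast; nlinarith
      have step2 : (∑ k ∈ Finset.Icc (1:ℤ) (M-1), g (2*(k-1)+1))
          = ∑ k ∈ Finset.Icc (0:ℤ) (M-2), g (2*k+1) := by
        refine Finset.sum_nbij' (fun k => k - 1) (fun k => k + 1) ?_ ?_ ?_ ?_ ?_
        · intro a ha; simp only [Finset.mem_Icc] at ha ⊢; beta_reduce; omega
        · intro a ha; simp only [Finset.mem_Icc] at ha ⊢; beta_reduce; omega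
        · intro a _; beta_reduce; omega
        · intro a _; beta_reduce; omega
        · intro a _; rfl
      have step3 : (∑ k ∈ Finset.Icc (0:ℤ) (M-2), g (2*k+1))
          ≤ ∑ k ∈ Finset.Icc (0:ℤ) (M-1), g (2*k+1) := by
        refine Finset.sum_le_sum_of_subset_of_nonneg ?_ (fun k _ _ => (gpos _).le)
        intro x hx; simp only [Finset.mem_Icc] at hx ⊢; omega
      calc _ ≤ _ := step1
        _ = _ := step2
        _ ≤ _ := step3
    have e1 : g (2 * (0:ℤ)) = g 0 := by norm_num
    linarith
  -- lower bound on the full sum by the four central terms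
  have hfour : g (-2) + g (-1) + g 0 + g 1 ≤ ∑ j ∈ Finset.Icc (-N) (N-1), g j := by
    have hsub : Finset.Icc (-2:ℤ) 1 ⊆ Finset.Icc (-N) (N-1) := by
      intro x hx; simp only [Finset.mem_Icc] at hx ⊢; omega
    refine le_trans (le_of_eq ?_)
      (Finset.sum_le_sum_of_subset_of_nonneg hsub (fun j _ _ => (gpos j).le))
    rw [show Finset.Icc (-2:ℤ) 1 = {-2, -1, 0, 1} from by
      ext x; simp only [Finset.mem_Icc, Finset.mem_insert, Finset.mem_singleton]; omega]
    rw [Finset.sum_insert (by norm_num), Finset.sum_insert (by norm_num),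
      Finset.sum_insert (by norm_num), Finset.sum_singleton]
    ring
  -- neighbor bounds: middle term dominated by its two neighbors
  have hexp : ∀ x y : ℤ, g x = g y * Real.exp ((((y:ℝ)+μ)^2 - ((x:ℝ)+μ)^2)/(2*σ^2)) := by
    intro x y
    rw [hg]; dsimp only
    rw [← Real.exp_add]
    congr 1
    ring
  have hkey : ∀ x z y : ℤ, ((((y:ℝ)+μ)^2 - ((x:ℝ)+μ)^2)
        + (((y:ℝ)+μ)^2 - ((z:ℝ)+μ)^2) = -2) → g y ≤ g x + g z := by
    intro x z y hsum
    have e1 := hexp x y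
    have e2 := hexp z y
    have l1 := Real.add_one_le_exp ((((y:ℝ)+μ)^2 - ((x:ℝ)+μ)^2)/(2*σ^2))
    have l2 := Real.add_one_le_exp ((((y:ℝ)+μ)^2 - ((z:ℝ)+μ)^2)/(2*σ^2))
    have hy := gpos y
    set c1 := (((y:ℝ)+μ)^2 - ((x:ℝ)+μ)^2)/(2*σ^2) with hc1
    set c2 := (((y:ℝ)+μ)^2 - ((z:ℝ)+μ)^2)/(2*σ^2) with hc2
    have hsum2 : c1 + c2 = (-2)/(2*σ^2) := by
      rw [hc1, hc2, ← add_div, hsum]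
    have hdiv : (-1:ℝ) ≤ (-2)/(2*σ^2) := by
      rw [le_div_iff₀ (by positivity : (0:ℝ) < 2*σ^2)]
      nlinarith
    have hmul1 : g y * (c1 + 1) ≤ g x := by
      rw [e1]; exact mul_le_mul_of_nonneg_left l1 hy.le
    have hmul2 : g y * (c2 + 1) ≤ g z := by
      rw [e2]; exact mul_le_mul_of_nonneg_left l2 hy.le
    have hnn : (0:ℝ) ≤ c1 + c2 + 1 := by linarith
    nlinarith [mul_nonneg hy.le hnn]
  have hn1 : g (-1) ≤ g (-2) + g 0 := by
    apply hkey; push_cast; ring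
  have hn0 : g 0 ≤ g (-1) + g 1 := by
    apply hkey; push_cast; ring
  -- assemble
  rw [hA, hsplit]
  set A := ∑ k ∈ Finset.Icc (-M) (M-1), g (2*k) with hAdef
  set B := ∑ k ∈ Finset.Icc (-M) (M-1), g (2*k+1) with hBdef
  have hF1 : 2 * g (-1) ≤ A + B := by
    rw [hAdef, hBdef, ← hsplit]
    have := gpos 1
    linarith [hfour]
  have hF0 : 2 * g 0 ≤ A + B := by
    rw [hAdef, hBdef, ← hsplit]
    have := gpos (-2)
    linarith [hfour]
  have hFpos : (0:ℝ) < A + B := lt_of_lt_of_le (by linarith [gpos 0]) hF0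
  have key : 2 * A / (A + B) - 1 = (A - B)/(A + B) := by
    rw [eq_div_iff hFpos.ne', sub_mul, one_mul, div_mul_cancel₀ _ hFpos.ne']
    ring
  rw [key, abs_div, abs_of_pos hFpos, div_le_iff₀ hFpos]
  refine abs_le.mpr ⟨by linarith, by linarith⟩
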